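/- The CEV forward price v(τ, y) = y · ∫_0^{r} η^{ν−1} e^{−η/2} dη / (2^ν Γ(ν)) with r = (2ν/a)²/(y^{1/ν} τ) satisfies the Black–Scholes equation v_τ = (a²/2) y^{2+1/ν} v_{yy} for all τ > 0, y > 0. -/

import Mathlib

open Set Real

lemma aux_int (ν : ℝ) (hν : 0 < ν) {r : ℝ} (hr : 0 < r) :
    HasDerivAt (fun s : ℝ => ∫ η in (0:ℝ)..s, η ^ (ν - 1) * Real.exp (-η/2))
      (r ^ (ν - 1) * Real.exp (-r/2)) r := by
  apply intervalIntegral.integral_hasDerivAt_right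
  · exact (intervalIntegral.intervalIntegrable_rpow' (by linarith)).mul_continuousOn
      (Continuous.continuousOn (by continuity))
  · exact (Measurable.stronglyMeasurable (by fun_prop)).stronglyMeasurableAtFilter
  · exact ((Real.continuousAt_rpow_const r (ν-1) (Or.inl (ne_of_gt hr))).mul
      ((Real.continuous_exp.comp (by continuity)).continuousAt))

lemma aux_f (ν : ℝ) {s : ℝ} (hs : 0 < s) :
    HasDerivAt (fun u : ℝ => u ^ (ν - 1) * Real.exp (-u/2))
      (((ν-1) * s ^ (ν - 2) - s ^ (ν-1)/2) * Real.exp (-s/2)) s := by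
  have h1 : HasDerivAt (fun u : ℝ => u ^ (ν-1)) ((ν-1) * s ^ (ν-1-1)) s :=
    Real.hasDerivAt_rpow_const (Or.inl hs.ne')
  have h2 : HasDerivAt (fun u : ℝ => Real.exp (-u/2)) (Real.exp (-s/2) * (-1/2)) s := by
    have : HasDerivAt (fun u : ℝ => -u/2) (-1/2) s := by
      simpa using ((hasDerivAt_id s).neg.div_const 2)
    exact this.exp
  have := h1.mul h2
  refine this.congr_deriv ?_
  rw [show ν-1-1 = ν-2 by ring]
  ring

lemma aux_rr (ν K τ : ℝ) (hν : 0 < ν) (hτ : τ ≠ 0) {x : ℝ} (hx : 0 < x) :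
    HasDerivAt (fun x' : ℝ => K / (x' ^ (1/ν) * τ))
      (-(K / (x ^ (1/ν) * τ)) / (ν * x)) x := by
  have hX : (0:ℝ) < x ^ (1/ν) := Real.rpow_pos_of_pos hx _
  have hpow : HasDerivAt (fun x' : ℝ => x' ^ (1/ν) * τ) (1/ν * x ^ (1/ν - 1) * τ) x :=
    (Real.hasDerivAt_rpow_const (Or.inl hx.ne')).mul_const τ
  have h := (hasDerivAt_const x K).div hpow (by
    simp only [ne_eq, mul_eq_zero, not_or]; exact ⟨hX.ne', hτ⟩)
  refine h.congr_deriv ?_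
  have hxx : x ^ (1/ν - 1) = x ^ (1/ν) / x := by
    rw [Real.rpow_sub hx, Real.rpow_one]
  rw [hxx]
  field_simp
  ring

lemma aux_dy (ν K τ C : ℝ) (hν : 0 < ν) (hK : 0 < K) (hτ : 0 < τ) (hC : C ≠ 0) {x : ℝ} (hx : 0 < x) :
    HasDerivAt (fun x' : ℝ => x' *
        (∫ η in (0:ℝ)..(K / (x' ^ (1/ν) * τ)), η ^ (ν - 1) * Real.exp (-η/2)) / C)
      (((∫ η in (0:ℝ)..(K / (x ^ (1/ν) * τ)), η ^ (ν - 1) * Real.exp (-η/2)) -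
          (K / (x ^ (1/ν) * τ)) / ν *
            ((K / (x ^ (1/ν) * τ)) ^ (ν - 1) * Real.exp (-(K / (x ^ (1/ν) * τ))/2))) / C) x := by
  have hX : (0:ℝ) < x ^ (1/ν) := Real.rpow_pos_of_pos hx _
  have hr : 0 < K / (x ^ (1/ν) * τ) := by positivity
  have hrr := aux_rr ν K τ hν hτ.ne' hx
  have hF : HasDerivAt
      (fun x' : ℝ => ∫ η in (0:ℝ)..(K / (x' ^ (1/ν) * τ)), η ^ (ν - 1) * Real.exp (-η/2))
      ((K / (x ^ (1/ν) * τ)) ^ (ν - 1) * Real.exp (-(K / (x ^ (1/ν) * τ))/2) *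
        (-(K / (x ^ (1/ν) * τ)) / (ν * x))) x := by have := (aux_int ν hν hr).comp x hrr; exact this
  have hv := ((hasDerivAt_id x).mul hF).div_const C
  refine hv.congr_deriv ?_
  have hxne : x ≠ 0 := hx.ne'
  have hνne : ν ≠ 0 := hν.ne'
  simp only [id]
  field_simp
  ring

lemma aux_d2 (ν K τ C : ℝ) (hν : 0 < ν) (hK : 0 < K) (hτ : 0 < τ) (hC : C ≠ 0)
    {y : ℝ} (hy : 0 < y) :
    HasDerivAt (fun x : ℝ =>
      ((∫ η in (0:ℝ)..(K / (x ^ (1/ν) * τ)), η ^ (ν - 1) * Real.exp (-η/2)) -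
          (K / (x ^ (1/ν) * τ)) / ν *
            ((K / (x ^ (1/ν) * τ)) ^ (ν - 1) * Real.exp (-(K / (x ^ (1/ν) * τ))/2))) / C)
      (-((K / (y ^ (1/ν) * τ))^2 *
          ((K / (y ^ (1/ν) * τ)) ^ (ν - 1) * Real.exp (-(K / (y ^ (1/ν) * τ))/2)))
        / (2 * ν^2 * y * C)) y := by
  have hX : (0:ℝ) < y ^ (1/ν) := Real.rpow_pos_of_pos hy _
  have hr : 0 < K / (y ^ (1/ν) * τ) := by positivity
  have hrr := aux_rr ν K τ hν hτ.ne' hy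
  have hF : HasDerivAt
      (fun x : ℝ => ∫ η in (0:ℝ)..(K / (x ^ (1/ν) * τ)), η ^ (ν - 1) * Real.exp (-η/2))
      ((K / (y ^ (1/ν) * τ)) ^ (ν - 1) * Real.exp (-(K / (y ^ (1/ν) * τ))/2) *
        (-(K / (y ^ (1/ν) * τ)) / (ν * y))) y := by have := (aux_int ν hν hr).comp y hrr; exact this
  have hf : HasDerivAt
      (fun x : ℝ => (K / (x ^ (1/ν) * τ)) ^ (ν - 1) * Real.exp (-(K / (x ^ (1/ν) * τ))/2))
      ((((ν-1) * (K / (y ^ (1/ν) * τ)) ^ (ν - 2) - (K / (y ^ (1/ν) * τ)) ^ (ν-1)/2) *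
          Real.exp (-(K / (y ^ (1/ν) * τ))/2)) *
        (-(K / (y ^ (1/ν) * τ)) / (ν * y))) y := by have := (aux_f ν hr).comp y hrr; exact this
  have h2 := (hrr.div_const ν).mul hf
  have h3 := (hF.sub h2).div_const C
  refine h3.congr_deriv ?_
  have h4 : (K / (y ^ (1/ν) * τ)) ^ (ν-1) = (K / (y ^ (1/ν) * τ)) ^ (ν-2) * (K / (y ^ (1/ν) * τ)) := by
    rw [show ν-1 = (ν-2)+1 by ring, Real.rpow_add_one hr.ne']
  rw [h4]
  have hyne : y ≠ 0 := hy.ne'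
  have hνne : ν ≠ 0 := hν.ne'
  field_simp
  ring

/-- The CEV forward price `v(τ,y) = y ∫_0^{r} η^(ν-1) e^(-η/2) dη/(2^ν Γ(ν))`,
`r = (2ν/a)²/(y^(1/ν) τ)`, satisfies the Black–Scholes equation
`v_τ = (a²/2) y^(2+1/ν) v_{yy}` for all `τ > 0`, `y > 0`. -/
theorem cev_forward_satisfies_bse
    (ν a : ℝ) (hν : 0 < ν) (ha : 0 < a) :
    ∀ τ : ℝ, 0 < τ → ∀ y : ℝ, 0 < y →
      deriv (fun t : ℝ => y *
          (∫ η in (0:ℝ)..((2*ν/a)^2 / (y ^ (1/ν) * t)),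
            η ^ (ν - 1) * Real.exp (-η/2)) / ((2:ℝ) ^ ν * Real.Gamma ν)) τ
        = a^2 / 2 * y ^ (2 + 1/ν) *
          deriv (deriv (fun y' : ℝ => y' *
            (∫ η in (0:ℝ)..((2*ν/a)^2 / (y' ^ (1/ν) * τ)),
              η ^ (ν - 1) * Real.exp (-η/2)) / ((2:ℝ) ^ ν * Real.Gamma ν))) y := by
  intro τ hτ y hy
  have hK : (0:ℝ) < (2*ν/a)^2 := by positivity
  have hX : (0:ℝ) < y ^ (1/ν) := Real.rpow_pos_of_pos hy _
  have hR : (0:ℝ) < (2*ν/a)^2 / (y ^ (1/ν) * τ) := by positivity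
  have hC : (0:ℝ) < (2:ℝ) ^ ν * Real.Gamma ν :=
    mul_pos (Real.rpow_pos_of_pos two_pos ν) (Real.Gamma_pos_of_pos hν)
  -- τ-derivative
  have hg : HasDerivAt (fun t : ℝ => (2*ν/a)^2 / (y ^ (1/ν) * t))
      (-((2*ν/a)^2 / (y ^ (1/ν) * τ)) / τ) τ := by
    have h := (hasDerivAt_const τ ((2*ν/a)^2)).div
      ((hasDerivAt_id τ).const_mul (y ^ (1/ν))) (by positivity)
    refine h.congr_deriv ?_
    simp only [id]
    field_simp
    ring
  have h1 : HasDerivAt (fun t : ℝ => y *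
      (∫ η in (0:ℝ)..((2*ν/a)^2 / (y ^ (1/ν) * t)),
        η ^ (ν - 1) * Real.exp (-η/2)) / ((2:ℝ) ^ ν * Real.Gamma ν))
      (y * ((((2*ν/a)^2 / (y ^ (1/ν) * τ)) ^ (ν - 1) *
          Real.exp (-((2*ν/a)^2 / (y ^ (1/ν) * τ))/2)) *
        (-((2*ν/a)^2 / (y ^ (1/ν) * τ)) / τ)) / ((2:ℝ) ^ ν * Real.Gamma ν)) τ :=
    (HasDerivAt.const_mul y ((aux_int ν hν hR).comp τ hg)).div_const _
  rw [h1.deriv]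
  -- second y-derivative
  have hev : deriv (fun y' : ℝ => y' *
      (∫ η in (0:ℝ)..((2*ν/a)^2 / (y' ^ (1/ν) * τ)),
        η ^ (ν - 1) * Real.exp (-η/2)) / ((2:ℝ) ^ ν * Real.Gamma ν))
      =ᶠ[nhds y] (fun x : ℝ =>
      ((∫ η in (0:ℝ)..((2*ν/a)^2 / (x ^ (1/ν) * τ)), η ^ (ν - 1) * Real.exp (-η/2)) -
          ((2*ν/a)^2 / (x ^ (1/ν) * τ)) / ν *
            (((2*ν/a)^2 / (x ^ (1/ν) * τ)) ^ (ν - 1) *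
              Real.exp (-((2*ν/a)^2 / (x ^ (1/ν) * τ))/2))) / ((2:ℝ) ^ ν * Real.Gamma ν)) := by
    filter_upwards [Ioi_mem_nhds hy] with x hx
    exact (aux_dy ν ((2*ν/a)^2) τ ((2:ℝ) ^ ν * Real.Gamma ν) hν hK hτ hC.ne' hx).deriv
  rw [Filter.EventuallyEq.deriv_eq hev,
    (aux_d2 ν ((2*ν/a)^2) τ ((2:ℝ) ^ ν * Real.Gamma ν) hν hK hτ hC.ne' hy).deriv]
  -- algebra
  have h4 : y ^ (2 + 1/ν) = y ^ (1/ν) * y * y := by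
    rw [show 2 + 1/ν = 1/ν + 1 + 1 by ring, Real.rpow_add_one hy.ne',
      Real.rpow_add_one hy.ne']
  rw [h4]
  set Y := y ^ (1/ν) with hYdef
  set R := (2*ν/a)^2 / (Y * τ) with hRdef
  set Fr := R ^ (ν - 1) * Real.exp (-R/2) with hFrdef
  rw [hRdef]
  have hνne : ν ≠ 0 := hν.ne'
  have hane : a ≠ 0 := ha.ne'
  field_simp
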